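/- Let X₁, X₂ be real Banach spaces and X = X₁ × X₂ with norm ‖(x,y)‖ = (‖x‖² + ‖y‖²)^{1/2}. Let A₁ : X₁ → X₁ and A₂ : X₂ → X₂ be bounded linear operators with bounded inverses satisfying ‖exp(−sA_j)‖ ≤ 1 for all s ≥ 0, and let B₁ : X₂ → X₁, B₂ : X₁ → X₂ be bounded. Define E_j(τ) = exp(−τA_j), X_j(τ) = (∫₀^τ exp(−σA_j) dσ) ∘ B_j, T₁(τ)(x,y) = (E₁(τ)x + X₁(τ)y, y), T₂(τ)(x,y) = (x, X₂(τ)x + E₂(τ)y), and 𝓐(x,y) = (A₁x, A₂y). Then there exists a constant C > 0, depending only on ‖B₁‖, ‖B₂‖, ‖A₁⁻¹‖, ‖A₂⁻¹‖, such that for all τ ≥ 0, ‖(T₁(τ) ∘ T₂(τ) − T₂(τ) ∘ T₁(τ)) ∘ 𝓐⁻¹‖ ≤ C·τ². -/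

import Mathlib

noncomputable section

open scoped Topology

set_option maxHeartbeats 1000000
set_option synthInstance.maxHeartbeats 400000
set_option linter.unusedSectionVars false

variable {X₁ X₂ : Type*} [NormedAddCommGroup X₁] [NormedSpace ℝ X₁] [CompleteSpace X₁]
  [NormedAddCommGroup X₂] [NormedSpace ℝ X₂] [CompleteSpace X₂]

/-- The operator exponential `exp (-τ A)` of a bounded operator `A`. -/
def expOp {X : Type*} [NormedAddCommGroup X] [NormedSpace ℝ X] [CompleteSpace X]
    (A : X →L[ℝ] X) (τ : ℝ) : X →L[ℝ] X :=
  NormedSpace.exp (-(τ • A))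

/-- The coupling operator `X(τ) = (∫₀^τ exp(-σ A) dσ) ∘ B`. -/
def Xop {X Y : Type*} [NormedAddCommGroup X] [NormedSpace ℝ X] [CompleteSpace X]
    [NormedAddCommGroup Y] [NormedSpace ℝ Y] (A : X →L[ℝ] X) (B : Y →L[ℝ] X) (τ : ℝ) :
    Y →L[ℝ] X :=
  (∫ σ in (0:ℝ)..τ, expOp A σ).comp B

/-- Lift of a block operator on `X₁ × X₂` to the `ℓ²`-product space
`X = X₁ × X₂` with norm `‖(x,y)‖ = (‖x‖² + ‖y‖²)^(1/2)`. -/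
def toL2 (M : (X₁ × X₂) →L[ℝ] (X₁ × X₂)) :
    WithLp 2 (X₁ × X₂) →L[ℝ] WithLp 2 (X₁ × X₂) :=
  ((WithLp.prodContinuousLinearEquiv 2 ℝ X₁ X₂).symm.toContinuousLinearMap.comp M).comp
    (WithLp.prodContinuousLinearEquiv 2 ℝ X₁ X₂).toContinuousLinearMap

/-- The split-step operator `T₁(τ)(x,y) = (exp(-τA₁)x + X₁(τ)y, y)`. -/
def T1 (A₁ : X₁ →L[ℝ] X₁) (B₁ : X₂ →L[ℝ] X₁) (τ : ℝ) :
    WithLp 2 (X₁ × X₂) →L[ℝ] WithLp 2 (X₁ × X₂) :=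
  toL2 (((expOp A₁ τ).coprod (Xop A₁ B₁ τ)).prod (ContinuousLinearMap.snd ℝ X₁ X₂))

/-- The split-step operator `T₂(τ)(x,y) = (x, X₂(τ)x + exp(-τA₂)y)`. -/
def T2 (A₂ : X₂ →L[ℝ] X₂) (B₂ : X₁ →L[ℝ] X₂) (τ : ℝ) :
    WithLp 2 (X₁ × X₂) →L[ℝ] WithLp 2 (X₁ × X₂) :=
  toL2 ((ContinuousLinearMap.fst ℝ X₁ X₂).prod ((Xop A₂ B₂ τ).coprod (expOp A₂ τ)))

/-- The split-step approximation operator `T(τ) = T₂(τ) ∘ T₁(τ)`. -/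
def Tfull (A₁ : X₁ →L[ℝ] X₁) (A₂ : X₂ →L[ℝ] X₂) (B₁ : X₂ →L[ℝ] X₁) (B₂ : X₁ →L[ℝ] X₂)
    (τ : ℝ) : WithLp 2 (X₁ × X₂) →L[ℝ] WithLp 2 (X₁ × X₂) :=
  (T2 A₂ B₂ τ).comp (T1 A₁ B₁ τ)

/-- The full operator `𝓒(x,y) = (A₁x - B₁y, A₂y - B₂x)`. -/
def opC (A₁ : X₁ →L[ℝ] X₁) (A₂ : X₂ →L[ℝ] X₂) (B₁ : X₂ →L[ℝ] X₁) (B₂ : X₁ →L[ℝ] X₂) :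
    WithLp 2 (X₁ × X₂) →L[ℝ] WithLp 2 (X₁ × X₂) :=
  toL2 ((A₁.coprod (-B₁)).prod ((-B₂).coprod A₂))

/-- The diagonal operator `𝓐(x,y) = (A₁x, A₂y)`. -/
def opA (A₁ : X₁ →L[ℝ] X₁) (A₂ : X₂ →L[ℝ] X₂) :
    WithLp 2 (X₁ × X₂) →L[ℝ] WithLp 2 (X₁ × X₂) :=
  toL2 (A₁.prodMap A₂)

/-- The off-diagonal coupling operator `𝓑(x,y) = (B₁y, B₂x)`. -/
def opB (B₁ : X₂ →L[ℝ] X₁) (B₂ : X₁ →L[ℝ] X₂) :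
    WithLp 2 (X₁ × X₂) →L[ℝ] WithLp 2 (X₁ × X₂) :=
  toL2 (((0 : X₁ →L[ℝ] X₁).coprod B₁).prod (B₂.coprod (0 : X₂ →L[ℝ] X₂)))

/-! ### Auxiliary lemmas about the operator exponential -/

section ExpAux

variable {X : Type*} [NormedAddCommGroup X] [NormedSpace ℝ X] [CompleteSpace X]

lemma expOp_continuous (A : X →L[ℝ] X) : Continuous fun σ => expOp A σ :=
  continuous_iff_continuousAt.2 fun σ => by
    have := (hasDerivAt_exp_smul_const (𝕂 := ℝ) (-A) σ).continuousAt
    simpa [expOp, smul_neg] using this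

lemma expOp_intervalIntegrable (A : X →L[ℝ] X) (a b : ℝ) :
    IntervalIntegrable (fun σ => expOp A σ) MeasureTheory.volume a b :=
  (expOp_continuous A).intervalIntegrable a b

lemma expOp_commute (A : X →L[ℝ] X) (σ : ℝ) : Commute A (expOp A σ) := by
  apply Commute.exp_right
  show _ = _
  simp [mul_smul_comm, smul_mul_assoc]

lemma expOp_zero (A : X →L[ℝ] X) : expOp A 0 = 1 := by
  simp [expOp, NormedSpace.exp_zero]

lemma hasDerivAt_expOp (A : X →L[ℝ] X) (σ : ℝ) :
    HasDerivAt (fun u => expOp A u) (-(A * expOp A σ)) σ := by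
  have h := hasDerivAt_exp_smul_const (𝕂 := ℝ) (-A) σ
  simp only [smul_neg, neg_mul, mul_neg] at h ⊢
  convert h using 2 with u
  all_goals first | exact (expOp_commute A σ).eq | rfl

lemma compL_integral_expOp (A L : X →L[ℝ] X) (τ : ℝ) :
    L.comp (∫ σ in (0:ℝ)..τ, expOp A σ) = ∫ σ in (0:ℝ)..τ, L.comp (expOp A σ) := by
  have h := ((ContinuousLinearMap.compL ℝ X X X) L).intervalIntegral_comp_comm
    (expOp_intervalIntegrable A 0 τ)
  simpa using h.symm

lemma integral_expOp_compL (A L : X →L[ℝ] X) (τ : ℝ) :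
    (∫ σ in (0:ℝ)..τ, expOp A σ).comp L = ∫ σ in (0:ℝ)..τ, (expOp A σ).comp L := by
  have h := ((ContinuousLinearMap.compL ℝ X X X).flip L).intervalIntegral_comp_comm
    (expOp_intervalIntegrable A 0 τ)
  simpa using h.symm

lemma mul_integral_expOp (A : X →L[ℝ] X) (τ : ℝ) :
    A.comp (∫ σ in (0:ℝ)..τ, expOp A σ) = 1 - expOp A τ := by
  have hcont : Continuous fun σ : ℝ => -(A * expOp A σ) :=
    (continuous_const.mul (expOp_continuous A)).neg
  have key : (∫ σ in (0:ℝ)..τ, -(A * expOp A σ)) = expOp A τ - expOp A 0 :=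
    intervalIntegral.integral_eq_sub_of_hasDerivAt
      (fun σ _ => hasDerivAt_expOp A σ) (hcont.intervalIntegrable 0 τ)
  rw [intervalIntegral.integral_neg] at key
  rw [compL_integral_expOp]
  rw [show (∫ σ in (0:ℝ)..τ, A.comp (expOp A σ)) = (∫ σ in (0:ℝ)..τ, A * expOp A σ) from rfl]
  rw [show (∫ σ in (0:ℝ)..τ, A * expOp A σ) = -(expOp A τ - expOp A 0) by rw [← key, neg_neg]]
  rw [expOp_zero]; abel

lemma integral_expOp_mul (A : X →L[ℝ] X) (τ : ℝ) :
    (∫ σ in (0:ℝ)..τ, expOp A σ).comp A = 1 - expOp A τ := by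
  rw [integral_expOp_compL,
    show (∫ σ in (0:ℝ)..τ, (expOp A σ).comp A) = ∫ σ in (0:ℝ)..τ, A.comp (expOp A σ) by
      congr 1; funext σ; exact ((expOp_commute A σ).symm : _),
    ← compL_integral_expOp, mul_integral_expOp]

lemma norm_integral_expOp_le (A : X →L[ℝ] X) {τ : ℝ} (hτ : 0 ≤ τ)
    (hA : ∀ s : ℝ, 0 ≤ s → ‖expOp A s‖ ≤ 1) :
    ‖∫ σ in (0:ℝ)..τ, expOp A σ‖ ≤ τ := by
  have := intervalIntegral.norm_integral_le_of_norm_le_const (C := 1)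
    (f := fun σ => expOp A σ) (a := 0) (b := τ) (fun x hx => by
      rw [Set.uIoc_of_le hτ] at hx
      exact hA x hx.1.le)
  simpa [abs_of_nonneg hτ] using this

/-- `(1 - exp(-τA)) ∘ A⁻¹ = ∫₀^τ exp(-σA) dσ`. -/
lemma one_sub_expOp_comp_inv (A Ainv : X →L[ℝ] X)
    (h' : A.comp Ainv = ContinuousLinearMap.id ℝ X) (τ : ℝ) :
    ((1 : X →L[ℝ] X) - expOp A τ).comp Ainv = ∫ σ in (0:ℝ)..τ, expOp A σ := by
  rw [← integral_expOp_mul A τ, ContinuousLinearMap.comp_assoc, h',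
    ContinuousLinearMap.comp_id]

end ExpAux

/-! ### Auxiliary lemmas about the `L²` product norm -/

section L2Aux

variable {α β : Type*} [NormedAddCommGroup α] [NormedAddCommGroup β]

lemma l2_norm_le_add (w : WithLp 2 (α × β)) : ‖w‖ ≤ ‖w.fst‖ + ‖w.snd‖ := by
  have h := WithLp.prod_norm_sq_eq_of_L2 w
  nlinarith [norm_nonneg w, norm_nonneg w.fst, norm_nonneg w.snd]

lemma l2_fst_norm_le (w : WithLp 2 (α × β)) : ‖w.fst‖ ≤ ‖w‖ := by
  have h := WithLp.prod_norm_sq_eq_of_L2 w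
  nlinarith [norm_nonneg w, norm_nonneg w.fst, sq_nonneg ‖w.snd‖]

lemma l2_snd_norm_le (w : WithLp 2 (α × β)) : ‖w.snd‖ ≤ ‖w‖ := by
  have h := WithLp.prod_norm_sq_eq_of_L2 w
  nlinarith [norm_nonneg w, norm_nonneg w.snd, sq_nonneg ‖w.fst‖]

end L2Aux

/-! ### Auxiliary lemmas about `toL2` -/

lemma norm_toL2_le (M : (X₁ × X₂) →L[ℝ] (X₁ × X₂)) : ‖toL2 M‖ ≤ 2 * ‖M‖ := by
  apply ContinuousLinearMap.opNorm_le_bound _ (by positivity)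
  intro v
  set q : X₁ × X₂ := WithLp.equiv 2 (X₁ × X₂) v with hq
  have hqn : ‖q‖ ≤ ‖v‖ := by
    rw [Prod.norm_def]
    exact max_le (l2_fst_norm_le v) (l2_snd_norm_le v)
  calc ‖toL2 M v‖ ≤ ‖(toL2 M v).fst‖ + ‖(toL2 M v).snd‖ := l2_norm_le_add _
    _ = ‖(M q).1‖ + ‖(M q).2‖ := rfl
    _ ≤ ‖M q‖ + ‖M q‖ := add_le_add (norm_fst_le _) (norm_snd_le _)
    _ = 2 * ‖M q‖ := (two_mul _).symm
    _ ≤ 2 * (‖M‖ * ‖q‖) := by gcongr; exact M.le_opNorm q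
    _ ≤ 2 * (‖M‖ * ‖v‖) := by gcongr
    _ = 2 * ‖M‖ * ‖v‖ := by ring

lemma toL2_comp (M N : (X₁ × X₂) →L[ℝ] (X₁ × X₂)) :
    (toL2 M).comp (toL2 N) = toL2 (M.comp N) := by
  apply ContinuousLinearMap.ext; intro v
  simp [toL2]

lemma toL2_sub (M N : (X₁ × X₂) →L[ℝ] (X₁ × X₂)) :
    toL2 M - toL2 N = toL2 (M - N) := by
  apply ContinuousLinearMap.ext; intro v
  simp [toL2]

lemma norm_block_le (f : X₁ →L[ℝ] X₁) (g : X₂ →L[ℝ] X₁) (h : X₁ →L[ℝ] X₂)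
    (k : X₂ →L[ℝ] X₂) :
    ‖(f.coprod g).prod (h.coprod k)‖ ≤ ‖f‖ + ‖g‖ + ‖h‖ + ‖k‖ := by
  apply ContinuousLinearMap.opNorm_le_bound _ (by positivity)
  rintro ⟨x, y⟩
  have hx : ‖x‖ ≤ ‖(x, y)‖ := norm_fst_le (x, y)
  have hy : ‖y‖ ≤ ‖(x, y)‖ := norm_snd_le (x, y)
  rw [show ((f.coprod g).prod (h.coprod k)) (x, y) = (f x + g y, h x + k y) from rfl,
    Prod.norm_def]
  apply max_le
  · calc ‖f x + g y‖ ≤ ‖f‖ * ‖x‖ + ‖g‖ * ‖y‖ :=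
        norm_add_le_of_le (f.le_opNorm x) (g.le_opNorm y)
      _ ≤ (‖f‖ + ‖g‖ + ‖h‖ + ‖k‖) * ‖(x, y)‖ := by
        nlinarith [norm_nonneg f, norm_nonneg g, norm_nonneg h, norm_nonneg k,
          norm_nonneg x, norm_nonneg y, norm_nonneg (x, y)]
  · calc ‖h x + k y‖ ≤ ‖h‖ * ‖x‖ + ‖k‖ * ‖y‖ :=
        norm_add_le_of_le (h.le_opNorm x) (k.le_opNorm y)
      _ ≤ (‖f‖ + ‖g‖ + ‖h‖ + ‖k‖) * ‖(x, y)‖ := by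
        nlinarith [norm_nonneg f, norm_nonneg g, norm_nonneg h, norm_nonneg k,
          norm_nonneg x, norm_nonneg y, norm_nonneg (x, y)]

/-- The block structure of the commutator composed with the inverse of the diagonal part. -/
lemma block_commutator_eq (A₁inv : X₁ →L[ℝ] X₁) (A₂inv : X₂ →L[ℝ] X₂)
    (X1 : X₂ →L[ℝ] X₁) (X2 : X₁ →L[ℝ] X₂) (E1 : X₁ →L[ℝ] X₁) (E2 : X₂ →L[ℝ] X₂) :
    ((((E1.coprod X1).prod (ContinuousLinearMap.snd ℝ X₁ X₂)).comp
        ((ContinuousLinearMap.fst ℝ X₁ X₂).prod (X2.coprod E2))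
      - ((ContinuousLinearMap.fst ℝ X₁ X₂).prod (X2.coprod E2)).comp
        (((E1.coprod X1).prod (ContinuousLinearMap.snd ℝ X₁ X₂)))).comp
        (A₁inv.prodMap A₂inv))
      = ((X1.comp (X2.comp A₁inv)).coprod
          (X1.comp (E2.comp A₂inv - A₂inv))).prod
          ((X2.comp (A₁inv - E1.comp A₁inv)).coprod
          (-(X2.comp (X1.comp A₂inv)))) := by
  apply ContinuousLinearMap.ext
  rintro ⟨x, y⟩
  simp [ContinuousLinearMap.comp_apply, ContinuousLinearMap.sub_apply, map_add, map_sub,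
    Prod.mk_sub_mk, Prod.mk_add_mk, Prod.ext_iff]
  constructor <;> abel

/-- The commutator of the split-step operators satisfies
`‖(T₁(τ)T₂(τ) - T₂(τ)T₁(τ)) 𝓐⁻¹‖ ≤ C τ²`. -/
theorem commutator_comp_opAinv_norm_le (A₁ : X₁ →L[ℝ] X₁) (A₂ : X₂ →L[ℝ] X₂)
    (B₁ : X₂ →L[ℝ] X₁) (B₂ : X₁ →L[ℝ] X₂)
    (A₁inv : X₁ →L[ℝ] X₁) (A₂inv : X₂ →L[ℝ] X₂)
    (hA₁inv : A₁inv.comp A₁ = ContinuousLinearMap.id ℝ X₁)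
    (hA₁inv' : A₁.comp A₁inv = ContinuousLinearMap.id ℝ X₁)
    (hA₂inv : A₂inv.comp A₂ = ContinuousLinearMap.id ℝ X₂)
    (hA₂inv' : A₂.comp A₂inv = ContinuousLinearMap.id ℝ X₂)
    (hA₁ : ∀ s : ℝ, 0 ≤ s → ‖expOp A₁ s‖ ≤ 1)
    (hA₂ : ∀ s : ℝ, 0 ≤ s → ‖expOp A₂ s‖ ≤ 1) :
    ∃ C > 0, ∀ τ : ℝ, 0 ≤ τ →
      ‖((T1 A₁ B₁ τ).comp (T2 A₂ B₂ τ) - (T2 A₂ B₂ τ).comp (T1 A₁ B₁ τ)).comp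
          (opA A₁inv A₂inv)‖ ≤ C * τ ^ 2 := by
  refine ⟨2 * (‖B₁‖ * ‖B₂‖ * ‖A₁inv‖ + ‖B₁‖ + ‖B₂‖ + ‖B₂‖ * ‖B₁‖ * ‖A₂inv‖) + 1,
    by positivity, ?_⟩
  intro τ hτ
  -- basic norm bounds
  have hX1 : ‖Xop A₁ B₁ τ‖ ≤ τ * ‖B₁‖ := by
    refine le_trans (ContinuousLinearMap.opNorm_comp_le _ _) ?_
    gcongr
    exact norm_integral_expOp_le A₁ hτ hA₁
  have hX2 : ‖Xop A₂ B₂ τ‖ ≤ τ * ‖B₂‖ := by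
    refine le_trans (ContinuousLinearMap.opNorm_comp_le _ _) ?_
    gcongr
    exact norm_integral_expOp_le A₂ hτ hA₂
  have hE1eq : A₁inv - (expOp A₁ τ).comp A₁inv = ∫ σ in (0:ℝ)..τ, expOp A₁ σ := by
    rw [← one_sub_expOp_comp_inv A₁ A₁inv hA₁inv' τ]
    simp [ContinuousLinearMap.sub_comp, ContinuousLinearMap.one_def, ContinuousLinearMap.id_comp]
  have hE2eq : A₂inv - (expOp A₂ τ).comp A₂inv = ∫ σ in (0:ℝ)..τ, expOp A₂ σ := by
    rw [← one_sub_expOp_comp_inv A₂ A₂inv hA₂inv' τ]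
    simp [ContinuousLinearMap.sub_comp, ContinuousLinearMap.one_def, ContinuousLinearMap.id_comp]
  have hE1 : ‖A₁inv - (expOp A₁ τ).comp A₁inv‖ ≤ τ := by
    rw [hE1eq]; exact norm_integral_expOp_le A₁ hτ hA₁
  have hE2 : ‖(expOp A₂ τ).comp A₂inv - A₂inv‖ ≤ τ := by
    rw [← norm_neg, neg_sub, hE2eq]; exact norm_integral_expOp_le A₂ hτ hA₂
  -- the structural identity
  have hEq : ((T1 A₁ B₁ τ).comp (T2 A₂ B₂ τ) - (T2 A₂ B₂ τ).comp (T1 A₁ B₁ τ)).comp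
      (opA A₁inv A₂inv)
      = toL2 ((((Xop A₁ B₁ τ).comp ((Xop A₂ B₂ τ).comp A₁inv)).coprod
          ((Xop A₁ B₁ τ).comp ((expOp A₂ τ).comp A₂inv - A₂inv))).prod
          (((Xop A₂ B₂ τ).comp (A₁inv - (expOp A₁ τ).comp A₁inv)).coprod
          (-((Xop A₂ B₂ τ).comp ((Xop A₁ B₁ τ).comp A₂inv))))) := by
    unfold T1 T2 opA
    rw [toL2_comp, toL2_comp, toL2_sub, toL2_comp, block_commutator_eq]
  -- block norm bounds
  have h11 : ‖(Xop A₁ B₁ τ).comp ((Xop A₂ B₂ τ).comp A₁inv)‖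
      ≤ ‖B₁‖ * ‖B₂‖ * ‖A₁inv‖ * τ ^ 2 := by
    calc ‖(Xop A₁ B₁ τ).comp ((Xop A₂ B₂ τ).comp A₁inv)‖
        ≤ ‖Xop A₁ B₁ τ‖ * (‖Xop A₂ B₂ τ‖ * ‖A₁inv‖) :=
          le_trans (ContinuousLinearMap.opNorm_comp_le _ _)
            (by gcongr; exact ContinuousLinearMap.opNorm_comp_le _ _)
      _ ≤ (τ * ‖B₁‖) * ((τ * ‖B₂‖) * ‖A₁inv‖) := by gcongr
      _ = ‖B₁‖ * ‖B₂‖ * ‖A₁inv‖ * τ ^ 2 := by ring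
  have h12 : ‖(Xop A₁ B₁ τ).comp ((expOp A₂ τ).comp A₂inv - A₂inv)‖ ≤ ‖B₁‖ * τ ^ 2 := by
    calc ‖(Xop A₁ B₁ τ).comp ((expOp A₂ τ).comp A₂inv - A₂inv)‖
        ≤ ‖Xop A₁ B₁ τ‖ * ‖(expOp A₂ τ).comp A₂inv - A₂inv‖ :=
          ContinuousLinearMap.opNorm_comp_le _ _
      _ ≤ (τ * ‖B₁‖) * τ := by gcongr
      _ = ‖B₁‖ * τ ^ 2 := by ring
  have h21 : ‖(Xop A₂ B₂ τ).comp (A₁inv - (expOp A₁ τ).comp A₁inv)‖ ≤ ‖B₂‖ * τ ^ 2 := by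
    calc ‖(Xop A₂ B₂ τ).comp (A₁inv - (expOp A₁ τ).comp A₁inv)‖
        ≤ ‖Xop A₂ B₂ τ‖ * ‖A₁inv - (expOp A₁ τ).comp A₁inv‖ :=
          ContinuousLinearMap.opNorm_comp_le _ _
      _ ≤ (τ * ‖B₂‖) * τ := by gcongr
      _ = ‖B₂‖ * τ ^ 2 := by ring
  have h22 : ‖-((Xop A₂ B₂ τ).comp ((Xop A₁ B₁ τ).comp A₂inv))‖
      ≤ ‖B₂‖ * ‖B₁‖ * ‖A₂inv‖ * τ ^ 2 := by
    rw [norm_neg]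
    calc ‖(Xop A₂ B₂ τ).comp ((Xop A₁ B₁ τ).comp A₂inv)‖
        ≤ ‖Xop A₂ B₂ τ‖ * (‖Xop A₁ B₁ τ‖ * ‖A₂inv‖) :=
          le_trans (ContinuousLinearMap.opNorm_comp_le _ _)
            (by gcongr; exact ContinuousLinearMap.opNorm_comp_le _ _)
      _ ≤ (τ * ‖B₂‖) * ((τ * ‖B₁‖) * ‖A₂inv‖) := by gcongr
      _ = ‖B₂‖ * ‖B₁‖ * ‖A₂inv‖ * τ ^ 2 := by ring
  rw [hEq]
  calc ‖toL2 ((((Xop A₁ B₁ τ).comp ((Xop A₂ B₂ τ).comp A₁inv)).coprod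
          ((Xop A₁ B₁ τ).comp ((expOp A₂ τ).comp A₂inv - A₂inv))).prod
          (((Xop A₂ B₂ τ).comp (A₁inv - (expOp A₁ τ).comp A₁inv)).coprod
          (-((Xop A₂ B₂ τ).comp ((Xop A₁ B₁ τ).comp A₂inv)))))‖
      ≤ 2 * ‖(((Xop A₁ B₁ τ).comp ((Xop A₂ B₂ τ).comp A₁inv)).coprod
          ((Xop A₁ B₁ τ).comp ((expOp A₂ τ).comp A₂inv - A₂inv))).prod
          (((Xop A₂ B₂ τ).comp (A₁inv - (expOp A₁ τ).comp A₁inv)).coprod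
          (-((Xop A₂ B₂ τ).comp ((Xop A₁ B₁ τ).comp A₂inv))))‖ := norm_toL2_le _
    _ ≤ 2 * (‖(Xop A₁ B₁ τ).comp ((Xop A₂ B₂ τ).comp A₁inv)‖
        + ‖(Xop A₁ B₁ τ).comp ((expOp A₂ τ).comp A₂inv - A₂inv)‖
        + ‖(Xop A₂ B₂ τ).comp (A₁inv - (expOp A₁ τ).comp A₁inv)‖
        + ‖-((Xop A₂ B₂ τ).comp ((Xop A₁ B₁ τ).comp A₂inv))‖) := by
        gcongr
        exact norm_block_le _ _ _ _
    _ ≤ (2 * (‖B₁‖ * ‖B₂‖ * ‖A₁inv‖ + ‖B₁‖ + ‖B₂‖ + ‖B₂‖ * ‖B₁‖ * ‖A₂inv‖) + 1) * τ ^ 2 := by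
        nlinarith [sq_nonneg τ]
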